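/- Let α > 0, β₁ ∈ [0,1), and α_t = α/t. Then there exists a constant C̄ > 0 such that for all integers t ≥ 2, ∑_{j=1}^{t−1} α_j β₁^{t−j} ≤ C̄ α_t, i.e., ∑_{j=1}^{t−1} (α/j) β₁^{t−j} ≤ C̄ α/t. -/
import Mathlib


/-- For the step-size schedule `α_t = α / t` and `β₁ ∈ [0,1)`, there is a constant `C̄ > 0`
such that for all `t ≥ 2`, `∑_{j=1}^{t-1} (α/j) β₁^{t-j} ≤ C̄ · α/t`. -/
theorem sum_stepsize_beta_le (α β₁ : ℝ) (hα : 0 < α) (hβ₁0 : 0 ≤ β₁) (hβ₁1 : β₁ < 1) :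
    ∃ C : ℝ, 0 < C ∧ ∀ t : ℕ, 2 ≤ t →
      ∑ j ∈ Finset.Icc 1 (t - 1), (α / (j : ℝ)) * β₁ ^ (t - j) ≤ C * (α / (t : ℝ)) := by
  have h1 : (0:ℝ) < 1 - β₁ := by linarith
  refine ⟨1/(1-β₁) + 1/(1-β₁)^2, by positivity, ?_⟩
  intro t ht
  have ht0 : (0:ℝ) < (t:ℝ) := by positivity
  set g : ℕ → ℝ := fun k => (1 + (k:ℝ)) * β₁ ^ k with hg
  have hgnonneg : ∀ k, 0 ≤ g k := by
    intro k; apply mul_nonneg; positivity; positivity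
  have key : ∀ j ∈ Finset.Icc 1 (t-1),
      (α / (j:ℝ)) * β₁ ^ (t - j) ≤ (α / (t:ℝ)) * g (t - j) := by
    intro j hj
    simp only [Finset.mem_Icc] at hj
    have hj1 : 1 ≤ j := hj.1
    have hjt : j + (t - j) = t := Nat.add_sub_cancel' (le_trans hj.2 (Nat.sub_le t 1))
    have hk1 : 1 ≤ t - j := by omega
    have hjR : (0:ℝ) < (j:ℝ) := by exact_mod_cast hj1
    have hnat : t ≤ j * (1 + (t - j)) := by
      have : j * (1 + (t - j)) = j + j * (t - j) := by ring
      have h2 : t - j ≤ j * (t - j) := Nat.le_mul_of_pos_left _ (by omega)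
      omega
    have hR : (t:ℝ) ≤ (j:ℝ) * (1 + ((t - j : ℕ):ℝ)) := by exact_mod_cast hnat
    have h3 : α / (j:ℝ) ≤ (α / (t:ℝ)) * (1 + ((t - j : ℕ):ℝ)) := by
      rw [div_mul_eq_mul_div, div_le_div_iff₀ hjR ht0]
      nlinarith [mul_le_mul_of_nonneg_left hR hα.le]
    calc (α / (j:ℝ)) * β₁ ^ (t - j)
        ≤ ((α / (t:ℝ)) * (1 + ((t - j : ℕ):ℝ))) * β₁ ^ (t - j) := by
          apply mul_le_mul_of_nonneg_right h3 (by positivity)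
      _ = (α / (t:ℝ)) * g (t - j) := by rw [hg]; ring
  have step1 : ∑ j ∈ Finset.Icc 1 (t - 1), (α / (j : ℝ)) * β₁ ^ (t - j)
      ≤ (α / (t:ℝ)) * ∑ j ∈ Finset.Icc 1 (t - 1), g (t - j) := by
    rw [Finset.mul_sum]; exact Finset.sum_le_sum key
  have reind : ∑ j ∈ Finset.Icc 1 (t - 1), g (t - j) = ∑ k ∈ Finset.Icc 1 (t - 1), g k := by
    refine Finset.sum_nbij' (fun j => t - j) (fun k => t - k) ?_ ?_ ?_ ?_ ?_ <;>
      simp only [Finset.mem_Icc] <;> intro a ha <;>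
      first
        | omega
        | trivial
  have hsum : HasSum g (1/(1-β₁) + β₁/(1-β₁)^2) := by
    have hnorm : ‖β₁‖ < 1 := by rw [Real.norm_eq_abs, abs_of_nonneg hβ₁0]; exact hβ₁1
    have h1s : HasSum (fun k : ℕ => β₁ ^ k) (1/(1-β₁)) := by
      simpa [one_div] using hasSum_geometric_of_lt_one hβ₁0 hβ₁1
    have h2s : HasSum (fun k : ℕ => (k:ℝ) * β₁ ^ k) (β₁/(1-β₁)^2) :=
      hasSum_coe_mul_geometric_of_norm_lt_one hnorm
    have := h1s.add h2s
    convert this using 2 with k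
    rw [hg]; ring
  have step2 : ∑ k ∈ Finset.Icc 1 (t - 1), g k ≤ 1/(1-β₁) + β₁/(1-β₁)^2 :=
    sum_le_hasSum _ (fun k _ => hgnonneg k) hsum
  calc ∑ j ∈ Finset.Icc 1 (t - 1), (α / (j : ℝ)) * β₁ ^ (t - j)
      ≤ (α / (t:ℝ)) * ∑ k ∈ Finset.Icc 1 (t - 1), g k := by rw [← reind]; exact step1
    _ ≤ (α / (t:ℝ)) * (1/(1-β₁) + β₁/(1-β₁)^2) := by
        apply mul_le_mul_of_nonneg_left step2 (by positivity)
    _ ≤ (1/(1-β₁) + 1/(1-β₁)^2) * (α / (t:ℝ)) := by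
        rw [mul_comm]
        have hle : β₁/(1-β₁)^2 ≤ 1/(1-β₁)^2 := by gcongr <;> linarith
        apply mul_le_mul_of_nonneg_right (by linarith) (by positivity)
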